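/- Every play of the graph game on (G, C, s, R) terminates and has at most n + 1 moves: its first n − 1 moves end at g₁,…,g_{n−1} respectively, its n-th move (made by the ∀-player) ends at some z_i with i ∈ {1,…,m}, and then either the ∃-player makes a winning (n+1)-st move to some vertex w_{i,j} ∈ R⁻¹(E) or the ∃-player has no legal move and loses. -/

import Mathlib

namespace PhutballQBF

/-- A literal: a variable `xₗ` (`pos l`) or its negation `¬xₗ` (`neg l`). -/
inductive Lit where
  | pos (l : ℕ)
  | neg (l : ℕ)
deriving DecidableEq

/-- The index of the variable occurring in a literal. -/
def Lit.var : Lit → ℕ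
  | .pos l => l
  | .neg l => l

/-- Evaluation of a literal under a Boolean assignment. -/
def Lit.eval (σ : ℕ → Bool) : Lit → Bool
  | .pos l => σ l
  | .neg l => !(σ l)

/-- Well-formedness of the 3CNF `F = F₁ ∧ ⋯ ∧ F_m`: the literal `l_{i,j}` (for
`1 ≤ i ≤ m`, `1 ≤ j ≤ 3`) mentions one of the variables `x₁, …, xₙ`. -/
def LitWF (n m : ℕ) (lit : ℕ → ℕ → Lit) : Prop :=
  ∀ i j, 1 ≤ i → i ≤ m → 1 ≤ j → j ≤ 3 → 1 ≤ (lit i j).var ∧ (lit i j).var ≤ n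

/-- The clause `Fᵢ = (l_{i,1} ∨ l_{i,2} ∨ l_{i,3})` evaluates to true under `σ`. -/
def ClauseTrue (lit : ℕ → ℕ → Lit) (i : ℕ) (σ : ℕ → Bool) : Prop :=
  ∃ j, 1 ≤ j ∧ j ≤ 3 ∧ (lit i j).eval σ = true

/-- The 3CNF formula `F = F₁ ∧ ⋯ ∧ F_m` evaluates to true under `σ`. -/
def FTrue (lit : ℕ → ℕ → Lit) (m : ℕ) (σ : ℕ → Bool) : Prop :=
  ∀ i, 1 ≤ i → i ≤ m → ClauseTrue lit i σ

/-- `QAux P i k σ`: the quantified statement with `k` variables `x_i, …, x_{i+k-1}`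
still to be quantified (existentially when the index is odd, universally when even),
the remaining variables having the values recorded in `σ`. -/
def QAux (P : (ℕ → Bool) → Prop) : ℕ → ℕ → (ℕ → Bool) → Prop
  | _, 0, σ => P σ
  | i, k + 1, σ =>
      if i % 2 = 1 then ∃ b, QAux P (i + 1) k (Function.update σ i b)
      else ∀ b, QAux P (i + 1) k (Function.update σ i b)

/-- Truth of the restricted quantified Boolean formula
`Q = ∃x₁ ∀x₂ ∃x₃ ⋯ ∀xₙ F(x₁, …, xₙ)`. -/
def QTrue (n m : ℕ) (lit : ℕ → ℕ → Lit) : Prop :=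
  QAux (FTrue lit m) 1 n (fun _ => false)

/-- The vertices of the graph `G` built from `Q` (with natural-number indices;
`g 0` is the extra vertex `g₀`). -/
inductive Vtx where
  | a (i : ℕ) | b (i : ℕ) | c (i : ℕ) | d (i : ℕ) | e (i : ℕ) | f (i : ℕ) | g (i : ℕ)
  | x (i : ℕ) | y (i : ℕ) | z (i : ℕ) | w (i : ℕ) (j : ℕ)
deriving DecidableEq

/-- A directed edge. -/
abbrev Edge := Vtx × Vtx

/-- The edge set `E(G)` of the graph `G` constructed from `Q` (with `n` variables and
`m` clauses): the variable components `G(xᵢ)`, the connecting edges `(gᵢ, aᵢ₊₁)` for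
`i = 0, …, n-1`, the edge `(gₙ, x₁)`, and the formula component `G(F)`. -/
def EG (n m : ℕ) : Set Edge :=
  { p | (∃ i, 1 ≤ i ∧ i ≤ n ∧
          (p = (Vtx.a i, Vtx.b i) ∨ p = (Vtx.a i, Vtx.c i) ∨ p = (Vtx.b i, Vtx.e i) ∨
           p = (Vtx.c i, Vtx.f i) ∨ p = (Vtx.e i, Vtx.d i) ∨ p = (Vtx.f i, Vtx.d i) ∨
           p = (Vtx.d i, Vtx.g i))) ∨
        (∃ i, i ≤ n - 1 ∧ p = (Vtx.g i, Vtx.a (i + 1))) ∨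
        p = (Vtx.g n, Vtx.x 1) ∨
        (∃ i, 1 ≤ i ∧ i ≤ m ∧
          (p = (Vtx.x i, Vtx.y i) ∨ p = (Vtx.y i, Vtx.z i) ∨ p = (Vtx.z i, Vtx.w i 1) ∨
           p = (Vtx.w i 1, Vtx.w i 2) ∨ p = (Vtx.w i 2, Vtx.w i 3))) ∨
        (∃ i, 1 ≤ i ∧ i ≤ m - 1 ∧ p = (Vtx.x i, Vtx.x (i + 1))) }

/-- The set `C = {g₀, g₁, …, g_{n-1}} ∪ {z₁, …, z_m}`. -/
def Cset (n m : ℕ) : Set Vtx :=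
  { v | (∃ i, i ≤ n - 1 ∧ v = Vtx.g i) ∨ (∃ i, 1 ≤ i ∧ i ≤ m ∧ v = Vtx.z i) }

/-- The relation `R ⊆ V(G) × E(G)`: `(w_{i,j}, (bₗ, eₗ)) ∈ R` iff `l_{i,j} = xₗ`, and
`(w_{i,j}, (cₗ, fₗ)) ∈ R` iff `l_{i,j} = ¬xₗ`. -/
def Rrel (lit : ℕ → ℕ → Lit) (m : ℕ) : Set (Vtx × Edge) :=
  { p | ∃ i j, 1 ≤ i ∧ i ≤ m ∧ 1 ≤ j ∧ j ≤ 3 ∧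
        ((∃ l, lit i j = Lit.pos l ∧ p = (Vtx.w i j, (Vtx.b l, Vtx.e l))) ∨
         (∃ l, lit i j = Lit.neg l ∧ p = (Vtx.w i j, (Vtx.c l, Vtx.f l)))) }

/-- `Rinv R E = R⁻¹(E)`: the vertices pointing some edge of `E`. -/
def Rinv (R : Set (Vtx × Edge)) (E : Set Edge) : Set Vtx :=
  { v | ∃ e ∈ E, (v, e) ∈ R }

/-- The set of (directed) edges traversed by a path given as its list of vertices. -/
def pathEdges (p : List Vtx) : Set Edge := { e | e ∈ p.zip p.tail }

/-- A legal move of the graph game from active vertex `u ∈ C` with current edge set `E`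
along the directed path `p` (a list of at least two pairwise distinct vertices whose
consecutive pairs are edges of `E`), ending at a vertex `v ∈ C ∪ R⁻¹(E)`, with all
internal vertices of `p` outside `C ∪ R⁻¹(E)`; the resulting edge set `E'` is obtained
by deleting the edges of `p` from `E`. -/
def LegalMoveVia (C : Set Vtx) (R : Set (Vtx × Edge))
    (u : Vtx) (E : Set Edge) (v : Vtx) (E' : Set Edge) (p : List Vtx) : Prop :=
  u ∈ C ∧ v ∈ C ∪ Rinv R E ∧
  2 ≤ p.length ∧ p.Nodup ∧
  p.head? = some u ∧ p.getLast? = some v ∧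
  List.Chain' (fun a b => (a, b) ∈ E) p ∧
  (∀ w ∈ (p.drop 1).dropLast, w ∉ C ∪ Rinv R E) ∧
  E' = E \ pathEdges p

/-- A legal move from `(u, E)` to `(v, E')` (along some path). -/
def LegalMove (C : Set Vtx) (R : Set (Vtx × Edge))
    (u : Vtx) (E : Set Edge) (v : Vtx) (E' : Set Edge) : Prop :=
  ∃ p, LegalMoveVia C R u E v E' p

/-- `MoverWins C R true u E` says that the player to move at the position with active
vertex `u` and current edge set `E` has a winning strategy; `MoverWins C R false u E`
says that the player to move loses whatever he does (in particular, if he has no legal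
move he loses immediately; a move to a vertex of `R⁻¹(E)` wins the game for the mover). -/
inductive MoverWins (C : Set Vtx) (R : Set (Vtx × Edge)) : Bool → Vtx → Set Edge → Prop
  | winsNow {u E v E'} : LegalMove C R u E v E' → v ∈ Rinv R E →
      MoverWins C R true u E
  | winsLater {u E v E'} : LegalMove C R u E v E' → MoverWins C R false v E' →
      MoverWins C R true u E
  | loses {u E} :
      (∀ v E', LegalMove C R u E v E' → v ∉ Rinv R E) →
      (∀ v E', LegalMove C R u E v E' → MoverWins C R true v E') →
      MoverWins C R false u E

/-- The two players of the graph game. -/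
inductive Player where
  | ex | fa
deriving DecidableEq

/-- The opponent of a player. -/
def Player.other : Player → Player
  | .ex => .fa
  | .fa => .ex

/-- A (maximal) play of the graph game on `(G, C, s, R)` starting from active vertex `s`
and edge set `E0`, with the ∃-player moving first.  `act k` and `edg k` are the active
vertex and edge set after `k` moves, `turn k` is the player who makes the `(k+1)`-st
move, and `len` is the total number of moves.  The play stops either because its last
move reached a vertex of `R⁻¹(E)` (the mover wins) or because the player to move has no
legal move (he loses); before that, no move may end in `R⁻¹(E)` without stopping. -/
structure Play (C : Set Vtx) (R : Set (Vtx × Edge)) (s : Vtx) (E0 : Set Edge) where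
  len : ℕ
  act : ℕ → Vtx
  edg : ℕ → Set Edge
  turn : ℕ → Player
  init_act : act 0 = s
  init_edg : edg 0 = E0
  init_turn : turn 0 = Player.ex
  turn_alt : ∀ k, turn (k + 1) = (turn k).other
  step : ∀ k, k < len → LegalMove C R (act k) (edg k) (act (k + 1)) (edg (k + 1))
  not_over : ∀ k, k + 1 < len → act (k + 1) ∉ Rinv R (edg k)
  maximal : (0 < len ∧ act len ∈ Rinv R (edg (len - 1))) ∨
            (∀ v E', ¬ LegalMove C R (act len) (edg len) v E')


section Lemmas
variable {n m : ℕ} {lit : ℕ → ℕ → Lit} {E : Set Edge}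

lemma succ_g {i : ℕ} {v : Vtx} (h : (Vtx.g i, v) ∈ EG n m) :
    (i ≤ n - 1 ∧ v = Vtx.a (i + 1)) ∨ (i = n ∧ v = Vtx.x 1) := by
  simp only [EG, Set.mem_setOf_eq, Prod.mk.injEq] at h
  rcases h with ⟨j,h1,h2,h3|h3|h3|h3|h3|h3|h3⟩ | ⟨j,h1,h3⟩ | h3 | ⟨j,h1,h2,h3|h3|h3|h3|h3⟩ | ⟨j,h1,h2,h3⟩ <;>
    simp_all

lemma succ_a {i : ℕ} {v : Vtx} (h : (Vtx.a i, v) ∈ EG n m) :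
    1 ≤ i ∧ i ≤ n ∧ (v = Vtx.b i ∨ v = Vtx.c i) := by
  simp only [EG, Set.mem_setOf_eq, Prod.mk.injEq] at h
  rcases h with ⟨j,h1,h2,h3|h3|h3|h3|h3|h3|h3⟩ | ⟨j,h1,h3⟩ | h3 | ⟨j,h1,h2,h3|h3|h3|h3|h3⟩ | ⟨j,h1,h2,h3⟩ <;>
    simp_all

lemma succ_b {i : ℕ} {v : Vtx} (h : (Vtx.b i, v) ∈ EG n m) :
    v = Vtx.e i := by
  simp only [EG, Set.mem_setOf_eq, Prod.mk.injEq] at h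
  rcases h with ⟨j,h1,h2,h3|h3|h3|h3|h3|h3|h3⟩ | ⟨j,h1,h3⟩ | h3 | ⟨j,h1,h2,h3|h3|h3|h3|h3⟩ | ⟨j,h1,h2,h3⟩ <;>
    simp_all

lemma succ_c {i : ℕ} {v : Vtx} (h : (Vtx.c i, v) ∈ EG n m) :
    v = Vtx.f i := by
  simp only [EG, Set.mem_setOf_eq, Prod.mk.injEq] at h
  rcases h with ⟨j,h1,h2,h3|h3|h3|h3|h3|h3|h3⟩ | ⟨j,h1,h3⟩ | h3 | ⟨j,h1,h2,h3|h3|h3|h3|h3⟩ | ⟨j,h1,h2,h3⟩ <;>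
    simp_all

lemma succ_e {i : ℕ} {v : Vtx} (h : (Vtx.e i, v) ∈ EG n m) :
    v = Vtx.d i := by
  simp only [EG, Set.mem_setOf_eq, Prod.mk.injEq] at h
  rcases h with ⟨j,h1,h2,h3|h3|h3|h3|h3|h3|h3⟩ | ⟨j,h1,h3⟩ | h3 | ⟨j,h1,h2,h3|h3|h3|h3|h3⟩ | ⟨j,h1,h2,h3⟩ <;>
    simp_all

lemma succ_f {i : ℕ} {v : Vtx} (h : (Vtx.f i, v) ∈ EG n m) :
    v = Vtx.d i := by
  simp only [EG, Set.mem_setOf_eq, Prod.mk.injEq] at h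
  rcases h with ⟨j,h1,h2,h3|h3|h3|h3|h3|h3|h3⟩ | ⟨j,h1,h3⟩ | h3 | ⟨j,h1,h2,h3|h3|h3|h3|h3⟩ | ⟨j,h1,h2,h3⟩ <;>
    simp_all

lemma succ_d {i : ℕ} {v : Vtx} (h : (Vtx.d i, v) ∈ EG n m) :
    v = Vtx.g i := by
  simp only [EG, Set.mem_setOf_eq, Prod.mk.injEq] at h
  rcases h with ⟨j,h1,h2,h3|h3|h3|h3|h3|h3|h3⟩ | ⟨j,h1,h3⟩ | h3 | ⟨j,h1,h2,h3|h3|h3|h3|h3⟩ | ⟨j,h1,h2,h3⟩ <;>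
    simp_all

lemma succ_x {i : ℕ} {v : Vtx} (h : (Vtx.x i, v) ∈ EG n m) :
    (1 ≤ i ∧ i ≤ m ∧ v = Vtx.y i) ∨ (1 ≤ i ∧ i ≤ m - 1 ∧ v = Vtx.x (i + 1)) := by
  simp only [EG, Set.mem_setOf_eq, Prod.mk.injEq] at h
  rcases h with ⟨j,h1,h2,h3|h3|h3|h3|h3|h3|h3⟩ | ⟨j,h1,h3⟩ | h3 | ⟨j,h1,h2,h3|h3|h3|h3|h3⟩ | ⟨j,h1,h2,h3⟩ <;>
    simp_all

lemma succ_y {i : ℕ} {v : Vtx} (h : (Vtx.y i, v) ∈ EG n m) :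
    1 ≤ i ∧ i ≤ m ∧ v = Vtx.z i := by
  simp only [EG, Set.mem_setOf_eq, Prod.mk.injEq] at h
  rcases h with ⟨j,h1,h2,h3|h3|h3|h3|h3|h3|h3⟩ | ⟨j,h1,h3⟩ | h3 | ⟨j,h1,h2,h3|h3|h3|h3|h3⟩ | ⟨j,h1,h2,h3⟩ <;>
    simp_all

lemma succ_z {i : ℕ} {v : Vtx} (h : (Vtx.z i, v) ∈ EG n m) :
    1 ≤ i ∧ i ≤ m ∧ v = Vtx.w i 1 := by
  simp only [EG, Set.mem_setOf_eq, Prod.mk.injEq] at h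
  rcases h with ⟨j,h1,h2,h3|h3|h3|h3|h3|h3|h3⟩ | ⟨j,h1,h3⟩ | h3 | ⟨j,h1,h2,h3|h3|h3|h3|h3⟩ | ⟨j,h1,h2,h3⟩ <;>
    simp_all

lemma succ_w {i k : ℕ} {v : Vtx} (h : (Vtx.w i k, v) ∈ EG n m) :
    (k = 1 ∧ v = Vtx.w i 2) ∨ (k = 2 ∧ v = Vtx.w i 3) := by
  simp only [EG, Set.mem_setOf_eq, Prod.mk.injEq] at h
  rcases h with ⟨j,h1,h2,h3|h3|h3|h3|h3|h3|h3⟩ | ⟨j,h1,h3⟩ | h3 | ⟨j,h1,h2,h3|h3|h3|h3|h3⟩ | ⟨j,h1,h2,h3⟩ <;>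
    simp_all

end Lemmas

/-- The edges of the variable component traversed by the move from `g k` to `g (k+1)`. -/
def gads (k : ℕ) : Set Edge :=
  {e | e = (Vtx.g k, Vtx.a (k+1)) ∨ e = (Vtx.a (k+1), Vtx.b (k+1)) ∨
       e = (Vtx.a (k+1), Vtx.c (k+1)) ∨ e = (Vtx.b (k+1), Vtx.e (k+1)) ∨
       e = (Vtx.c (k+1), Vtx.f (k+1)) ∨ e = (Vtx.e (k+1), Vtx.d (k+1)) ∨
       e = (Vtx.f (k+1), Vtx.d (k+1)) ∨ e = (Vtx.d (k+1), Vtx.g (k+1))}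

section Lemmas2
variable {n m : ℕ} {lit : ℕ → ℕ → Lit} {E : Set Edge}

lemma gads_disj {j k : ℕ} (h : j ≠ k) {e : Edge} (h1 : e ∈ gads j) (h2 : e ∈ gads k) :
    False := by
  simp only [gads, Set.mem_setOf_eq] at h1 h2
  rcases h1 with rfl|rfl|rfl|rfl|rfl|rfl|rfl|rfl <;>
    rcases h2 with h2|h2|h2|h2|h2|h2|h2|h2 <;> simp_all [Prod.ext_iff]

lemma gads_not_x {j i : ℕ} {u : Vtx} : (u, Vtx.x i) ∉ gads j := by
  simp [gads, Prod.ext_iff]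

lemma gads_not_y {j i : ℕ} {u : Vtx} : (u, Vtx.y i) ∉ gads j := by
  simp [gads, Prod.ext_iff]

lemma gads_not_z {j i : ℕ} {u : Vtx} : (u, Vtx.z i) ∉ gads j := by
  simp [gads, Prod.ext_iff]

lemma gads_sub_EG {k : ℕ} (h : k + 1 ≤ n) : gads k ⊆ EG n m := by
  intro e he
  rcases he with rfl|rfl|rfl|rfl|rfl|rfl|rfl|rfl
  · exact Or.inr (Or.inl ⟨k, by omega, rfl⟩)
  all_goals exact Or.inl ⟨k+1, by omega, by omega, by tauto⟩

lemma rinv_w {v : Vtx} (h : v ∈ Rinv (Rrel lit m) E) :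
    ∃ i j, 1 ≤ i ∧ i ≤ m ∧ 1 ≤ j ∧ j ≤ 3 ∧ v = Vtx.w i j := by
  obtain ⟨e, _, hv⟩ := h
  simp only [Rrel, Set.mem_setOf_eq] at hv
  obtain ⟨i, j, h1, h2, h3, h4, h5⟩ := hv
  rcases h5 with ⟨l, _, h5⟩ | ⟨l, _, h5⟩ <;>
    exact ⟨i, j, h1, h2, h3, h4, congrArg Prod.fst h5⟩

lemma a_nCR {i : ℕ} : Vtx.a i ∉ Cset n m ∪ Rinv (Rrel lit m) E := by
  rintro (h | h)
  · simp [Cset] at h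
  · obtain ⟨_,_,_,_,_,_,h⟩ := rinv_w h; simp at h

lemma b_nCR {i : ℕ} : Vtx.b i ∉ Cset n m ∪ Rinv (Rrel lit m) E := by
  rintro (h | h)
  · simp [Cset] at h
  · obtain ⟨_,_,_,_,_,_,h⟩ := rinv_w h; simp at h

lemma c_nCR {i : ℕ} : Vtx.c i ∉ Cset n m ∪ Rinv (Rrel lit m) E := by
  rintro (h | h)
  · simp [Cset] at h
  · obtain ⟨_,_,_,_,_,_,h⟩ := rinv_w h; simp at h

lemma e_nCR {i : ℕ} : Vtx.e i ∉ Cset n m ∪ Rinv (Rrel lit m) E := by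
  rintro (h | h)
  · simp [Cset] at h
  · obtain ⟨_,_,_,_,_,_,h⟩ := rinv_w h; simp at h

lemma f_nCR {i : ℕ} : Vtx.f i ∉ Cset n m ∪ Rinv (Rrel lit m) E := by
  rintro (h | h)
  · simp [Cset] at h
  · obtain ⟨_,_,_,_,_,_,h⟩ := rinv_w h; simp at h

lemma d_nCR {i : ℕ} : Vtx.d i ∉ Cset n m ∪ Rinv (Rrel lit m) E := by
  rintro (h | h)
  · simp [Cset] at h
  · obtain ⟨_,_,_,_,_,_,h⟩ := rinv_w h; simp at h

lemma x_nCR {i : ℕ} : Vtx.x i ∉ Cset n m ∪ Rinv (Rrel lit m) E := by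
  rintro (h | h)
  · simp [Cset] at h
  · obtain ⟨_,_,_,_,_,_,h⟩ := rinv_w h; simp at h

lemma y_nCR {i : ℕ} : Vtx.y i ∉ Cset n m ∪ Rinv (Rrel lit m) E := by
  rintro (h | h)
  · simp [Cset] at h
  · obtain ⟨_,_,_,_,_,_,h⟩ := rinv_w h; simp at h

lemma g_nR {i : ℕ} : Vtx.g i ∉ Rinv (Rrel lit m) E := by
  intro h; obtain ⟨_,_,_,_,_,_,h⟩ := rinv_w h; simp at h

lemma z_nR {i : ℕ} : Vtx.z i ∉ Rinv (Rrel lit m) E := by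
  intro h; obtain ⟨_,_,_,_,_,_,h⟩ := rinv_w h; simp at h

lemma g_nC {i : ℕ} (h : ¬ (i ≤ n - 1)) : Vtx.g i ∉ Cset n m := by
  rintro (⟨j, hj, hij⟩ | ⟨j, _, _, hij⟩) <;> simp_all <;> omega

lemma g_mC {i : ℕ} (h : i ≤ n - 1) : Vtx.g i ∈ Cset n m := Or.inl ⟨i, h, rfl⟩

lemma z_mC {i : ℕ} (h1 : 1 ≤ i) (h2 : i ≤ m) : Vtx.z i ∈ Cset n m :=
  Or.inr ⟨i, h1, h2, rfl⟩

lemma w_nC {i j : ℕ} : Vtx.w i j ∉ Cset n m := by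
  rintro (⟨l, hl, hij⟩ | ⟨l, _, _, hij⟩) <;> simp_all

/-- Forcing for a move from `g k` with `k + 1 ≤ n - 1`. -/
lemma force_small {k : ℕ} (hk1 : k + 1 ≤ n - 1) (hE : E ⊆ EG n m) {v : Vtx} {p : List Vtx}
    (hlen : 2 ≤ p.length) (hhead : p.head? = some (Vtx.g k)) (hlast : p.getLast? = some v)
    (hchain : List.Chain' (fun a b => (a, b) ∈ E) p)
    (hint : ∀ u ∈ (p.drop 1).dropLast, u ∉ Cset n m ∪ Rinv (Rrel lit m) E)
    (hv : v ∈ Cset n m ∪ Rinv (Rrel lit m) E) :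
    p = [Vtx.g k, Vtx.a (k+1), Vtx.b (k+1), Vtx.e (k+1), Vtx.d (k+1), Vtx.g (k+1)] ∨
    p = [Vtx.g k, Vtx.a (k+1), Vtx.c (k+1), Vtx.f (k+1), Vtx.d (k+1), Vtx.g (k+1)] := by
  rcases p with _ | ⟨u0, p⟩
  · simp at hlen
  obtain rfl : u0 = Vtx.g k := by simpa using hhead
  rcases p with _ | ⟨u1, p⟩
  · simp at hlen
  obtain ⟨h01, hchain⟩ := List.isChain_cons_cons.mp hchain
  rcases succ_g (hE h01) with ⟨-, rfl⟩ | ⟨rfl, rfl⟩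
  swap
  · omega
  rcases p with _ | ⟨u2, p⟩
  · obtain rfl : v = Vtx.a (k+1) := by simpa using hlast.symm
    exact absurd hv a_nCR
  obtain ⟨h12, hchain⟩ := List.isChain_cons_cons.mp hchain
  rcases succ_a (hE h12) with ⟨-, -, rfl | rfl⟩
  · -- b branch
    rcases p with _ | ⟨u3, p⟩
    · obtain rfl : v = Vtx.b (k+1) := by simpa using hlast.symm
      exact absurd hv b_nCR
    obtain ⟨h23, hchain⟩ := List.isChain_cons_cons.mp hchain
    obtain rfl := succ_b (hE h23)
    rcases p with _ | ⟨u4, p⟩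
    · obtain rfl : v = Vtx.e (k+1) := by simpa using hlast.symm
      exact absurd hv e_nCR
    obtain ⟨h34, hchain⟩ := List.isChain_cons_cons.mp hchain
    obtain rfl := succ_e (hE h34)
    rcases p with _ | ⟨u5, p⟩
    · obtain rfl : v = Vtx.d (k+1) := by simpa using hlast.symm
      exact absurd hv d_nCR
    obtain ⟨h45, hchain⟩ := List.isChain_cons_cons.mp hchain
    obtain rfl := succ_d (hE h45)
    rcases p with _ | ⟨u6, p⟩
    · exact Or.inl rfl
    · exact absurd (Or.inl (g_mC (by omega)))
        (hint (Vtx.g (k+1)) (by simp [List.dropLast_cons₂]))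
  · -- c branch
    rcases p with _ | ⟨u3, p⟩
    · obtain rfl : v = Vtx.c (k+1) := by simpa using hlast.symm
      exact absurd hv c_nCR
    obtain ⟨h23, hchain⟩ := List.isChain_cons_cons.mp hchain
    obtain rfl := succ_c (hE h23)
    rcases p with _ | ⟨u4, p⟩
    · obtain rfl : v = Vtx.f (k+1) := by simpa using hlast.symm
      exact absurd hv f_nCR
    obtain ⟨h34, hchain⟩ := List.isChain_cons_cons.mp hchain
    obtain rfl := succ_f (hE h34)
    rcases p with _ | ⟨u5, p⟩
    · obtain rfl : v = Vtx.d (k+1) := by simpa using hlast.symm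
      exact absurd hv d_nCR
    obtain ⟨h45, hchain⟩ := List.isChain_cons_cons.mp hchain
    obtain rfl := succ_d (hE h45)
    rcases p with _ | ⟨u6, p⟩
    · exact Or.inr rfl
    · exact absurd (Or.inl (g_mC (by omega)))
        (hint (Vtx.g (k+1)) (by simp [List.dropLast_cons₂]))

end Lemmas2

section Lemmas3
variable {n m : ℕ} {lit : ℕ → ℕ → Lit} {E : Set Edge}

lemma mem_dropLast_cons {α : Type*} {x a : α} {l : List α} (h : x ∈ l.dropLast) :
    x ∈ (a :: l).dropLast := by
  cases l with
  | nil => simp at h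
  | cons b l' => rw [List.dropLast_cons₂]; exact List.mem_cons_of_mem _ h

/-- Forcing along the formula component: a path starting at `x i` whose non-final
vertices avoid `C ∪ R⁻¹(E)` and whose last vertex lies in it must end at some `z i'`. -/
lemma force_xchain (hE : E ⊆ EG n m) :
    ∀ (p : List Vtx) (i : ℕ) (v : Vtx),
      p.head? = some (Vtx.x i) →
      p.getLast? = some v →
      List.Chain' (fun a b => (a, b) ∈ E) p →
      (∀ u ∈ p.dropLast, u ∉ Cset n m ∪ Rinv (Rrel lit m) E) →
      v ∈ Cset n m ∪ Rinv (Rrel lit m) E →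
      ∃ i', 1 ≤ i' ∧ i' ≤ m ∧ v = Vtx.z i' := by
  intro p
  induction p with
  | nil => intro i v h; simp at h
  | cons u0 l ih =>
    intro i v hhead hlast hchain hint hv
    obtain rfl : u0 = Vtx.x i := by simpa using hhead
    rcases l with _ | ⟨u1, l⟩
    · obtain rfl : v = Vtx.x i := by simpa using hlast.symm
      exact absurd hv x_nCR
    obtain ⟨h01, hchain⟩ := List.isChain_cons_cons.mp hchain
    rcases succ_x (hE h01) with ⟨h1, h2, rfl⟩ | ⟨h1, h2, rfl⟩
    · -- to y i
      rcases l with _ | ⟨u2, l⟩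
      · obtain rfl : v = Vtx.y i := by simpa using hlast.symm
        exact absurd hv y_nCR
      obtain ⟨h12, hchain⟩ := List.isChain_cons_cons.mp hchain
      obtain ⟨-, -, rfl⟩ := succ_y (hE h12)
      rcases l with _ | ⟨u3, l⟩
      · obtain rfl : v = Vtx.z i := by simpa using hlast.symm
        exact ⟨i, h1, h2, rfl⟩
      · exact absurd (Or.inl (z_mC h1 h2))
          (hint (Vtx.z i) (by simp [List.dropLast_cons₂]))
    · -- to x (i+1): recurse
      refine ih (i + 1) v rfl ?_ hchain ?_ hv
      · rw [← hlast, List.getLast?_cons_cons]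
      · exact fun u hu => hint u (mem_dropLast_cons hu)

/-- Forcing for the `n`-th move, from `g (n-1)`: it ends at some `z i`. -/
lemma force_big (hn2 : 2 ≤ n) (hE : E ⊆ EG n m) {v : Vtx} {p : List Vtx}
    (hlen : 2 ≤ p.length) (hhead : p.head? = some (Vtx.g (n - 1)))
    (hlast : p.getLast? = some v)
    (hchain : List.Chain' (fun a b => (a, b) ∈ E) p)
    (hint : ∀ u ∈ (p.drop 1).dropLast, u ∉ Cset n m ∪ Rinv (Rrel lit m) E)
    (hv : v ∈ Cset n m ∪ Rinv (Rrel lit m) E) :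
    ∃ i, 1 ≤ i ∧ i ≤ m ∧ v = Vtx.z i := by
  have hn1 : n - 1 + 1 = n := by omega
  rcases p with _ | ⟨u0, p⟩
  · simp at hlen
  obtain rfl : u0 = Vtx.g (n - 1) := by simpa using hhead
  rcases p with _ | ⟨u1, p⟩
  · simp at hlen
  obtain ⟨h01, hchain⟩ := List.isChain_cons_cons.mp hchain
  rcases succ_g (hE h01) with ⟨-, rfl⟩ | ⟨h, rfl⟩
  swap
  · omega
  rw [hn1] at *
  -- generic gadget traversal to d n then g n
  have main : ∀ (q : List Vtx),
      (Vtx.g n :: q).getLast? = some v →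
      List.Chain' (fun a b => (a, b) ∈ E) (Vtx.g n :: q) →
      (∀ u' ∈ (Vtx.g n :: q).dropLast, u' ∉ Cset n m ∪ Rinv (Rrel lit m) E) →
      ∃ i, 1 ≤ i ∧ i ≤ m ∧ v = Vtx.z i := by
    intro q hlast' hchain' hint'
    rcases q with _ | ⟨w1, q⟩
    · obtain rfl : v = Vtx.g n := by simpa using hlast'.symm
      rcases hv with hv | hv
      · exact absurd hv (g_nC (by omega))
      · exact absurd hv g_nR
    obtain ⟨hgw, hchain'⟩ := List.isChain_cons_cons.mp hchain'
    rcases succ_g (hE hgw) with ⟨h, rfl⟩ | ⟨-, rfl⟩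
    · omega
    refine force_xchain hE (Vtx.x 1 :: q) 1 v rfl ?_ hchain' ?_ hv
    · rw [← hlast', List.getLast?_cons_cons]
    · exact fun u' hu' => hint' u' (mem_dropLast_cons hu')
  rcases p with _ | ⟨u2, p⟩
  · obtain rfl : v = Vtx.a n := by simpa using hlast.symm
    exact absurd hv a_nCR
  obtain ⟨h12, hchain⟩ := List.isChain_cons_cons.mp hchain
  rcases succ_a (hE h12) with ⟨-, -, rfl | rfl⟩
  · rcases p with _ | ⟨u3, p⟩
    · obtain rfl : v = Vtx.b n := by simpa using hlast.symm
      exact absurd hv b_nCR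
    obtain ⟨h23, hchain⟩ := List.isChain_cons_cons.mp hchain
    obtain rfl := succ_b (hE h23)
    rcases p with _ | ⟨u4, p⟩
    · obtain rfl : v = Vtx.e n := by simpa using hlast.symm
      exact absurd hv e_nCR
    obtain ⟨h34, hchain⟩ := List.isChain_cons_cons.mp hchain
    obtain rfl := succ_e (hE h34)
    rcases p with _ | ⟨u5, p⟩
    · obtain rfl : v = Vtx.d n := by simpa using hlast.symm
      exact absurd hv d_nCR
    obtain ⟨h45, hchain⟩ := List.isChain_cons_cons.mp hchain
    obtain rfl := succ_d (hE h45)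
    refine main p ?_ hchain ?_
    · rw [← hlast]
      simp only [List.getLast?_cons_cons]
    · exact fun u' hu' => hint u'
        (mem_dropLast_cons (mem_dropLast_cons (mem_dropLast_cons (mem_dropLast_cons hu'))))
  · rcases p with _ | ⟨u3, p⟩
    · obtain rfl : v = Vtx.c n := by simpa using hlast.symm
      exact absurd hv c_nCR
    obtain ⟨h23, hchain⟩ := List.isChain_cons_cons.mp hchain
    obtain rfl := succ_c (hE h23)
    rcases p with _ | ⟨u4, p⟩
    · obtain rfl : v = Vtx.f n := by simpa using hlast.symm
      exact absurd hv f_nCR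
    obtain ⟨h34, hchain⟩ := List.isChain_cons_cons.mp hchain
    obtain rfl := succ_f (hE h34)
    rcases p with _ | ⟨u5, p⟩
    · obtain rfl : v = Vtx.d n := by simpa using hlast.symm
      exact absurd hv d_nCR
    obtain ⟨h45, hchain⟩ := List.isChain_cons_cons.mp hchain
    obtain rfl := succ_d (hE h45)
    refine main p ?_ hchain ?_
    · rw [← hlast]
      simp only [List.getLast?_cons_cons]
    · exact fun u' hu' => hint u'
        (mem_dropLast_cons (mem_dropLast_cons (mem_dropLast_cons (mem_dropLast_cons hu'))))

/-- Any legal-move path from `z i` under `E ⊆ EG` ends in `R⁻¹(E)`. -/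
lemma force_zmove (hE : E ⊆ EG n m) {i : ℕ} {v : Vtx} {p : List Vtx}
    (hlen : 2 ≤ p.length) (hhead : p.head? = some (Vtx.z i)) (hlast : p.getLast? = some v)
    (hchain : List.Chain' (fun a b => (a, b) ∈ E) p)
    (hv : v ∈ Cset n m ∪ Rinv (Rrel lit m) E) :
    v ∈ Rinv (Rrel lit m) E := by
  rcases p with _ | ⟨u0, p⟩
  · simp at hlen
  obtain rfl : u0 = Vtx.z i := by simpa using hhead
  rcases p with _ | ⟨u1, p⟩
  · simp at hlen
  obtain ⟨h01, hchain⟩ := List.isChain_cons_cons.mp hchain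
  obtain ⟨-, -, rfl⟩ := succ_z (hE h01)
  rcases p with _ | ⟨u2, p⟩
  · obtain rfl : v = Vtx.w i 1 := by simpa using hlast.symm
    exact hv.resolve_left w_nC
  obtain ⟨h12, hchain⟩ := List.isChain_cons_cons.mp hchain
  rcases succ_w (hE h12) with ⟨-, rfl⟩ | ⟨h, -⟩
  swap
  · omega
  rcases p with _ | ⟨u3, p⟩
  · obtain rfl : v = Vtx.w i 2 := by simpa using hlast.symm
    exact hv.resolve_left w_nC
  obtain ⟨h23, hchain⟩ := List.isChain_cons_cons.mp hchain
  rcases succ_w (hE h23) with ⟨h, -⟩ | ⟨-, rfl⟩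
  · omega
  rcases p with _ | ⟨u4, p⟩
  · obtain rfl : v = Vtx.w i 3 := by simpa using hlast.symm
    exact hv.resolve_left w_nC
  obtain ⟨h34, hchain⟩ := List.isChain_cons_cons.mp hchain
  rcases succ_w (hE h34) with ⟨h, -⟩ | ⟨h, -⟩ <;> omega

end Lemmas3

section Lemmas4
variable {n m : ℕ} {lit : ℕ → ℕ → Lit}

lemma pathEdges_b {k : ℕ} :
    pathEdges [Vtx.g k, Vtx.a (k+1), Vtx.b (k+1), Vtx.e (k+1), Vtx.d (k+1), Vtx.g (k+1)] ⊆
      gads k := by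
  intro e he
  simp only [pathEdges, List.tail_cons, List.zip_cons_cons, List.zip_nil_right, Set.mem_setOf_eq, List.zipWith_cons_cons, List.zipWith_nil_right, List.mem_cons,
    List.not_mem_nil, or_false] at he
  rcases he with rfl|rfl|rfl|rfl|rfl <;> simp [gads]

lemma pathEdges_c {k : ℕ} :
    pathEdges [Vtx.g k, Vtx.a (k+1), Vtx.c (k+1), Vtx.f (k+1), Vtx.d (k+1), Vtx.g (k+1)] ⊆
      gads k := by
  intro e he
  simp only [pathEdges, List.tail_cons, List.zip_cons_cons, List.zip_nil_right, Set.mem_setOf_eq, List.zipWith_cons_cons, List.zipWith_nil_right, List.mem_cons,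
    List.not_mem_nil, or_false] at he
  rcases he with rfl|rfl|rfl|rfl|rfl <;> simp [gads]

lemma exists_small_move {k : ℕ} (hk : k + 1 ≤ n - 1) {E0 : Set Edge}
    (hinv : ∀ e ∈ EG n m, (∀ j, j < k → e ∉ gads j) → e ∈ E0) :
    ∃ v E', LegalMove (Cset n m) (Rrel lit m) (Vtx.g k) E0 v E' := by
  have hmem : ∀ e ∈ gads k, e ∈ E0 := fun e he =>
    hinv e (gads_sub_EG (by omega) he) (fun j hj hj2 => gads_disj (by omega : j ≠ k) hj2 he)
  refine ⟨Vtx.g (k+1), _,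
    [Vtx.g k, Vtx.a (k+1), Vtx.b (k+1), Vtx.e (k+1), Vtx.d (k+1), Vtx.g (k+1)],
    g_mC (by omega), Or.inl (g_mC hk), by simp, by simp, rfl, by simp, ?_, ?_, rfl⟩
  · refine List.isChain_cons_cons.mpr ⟨hmem _ (by simp [gads]), ?_⟩
    refine List.isChain_cons_cons.mpr ⟨hmem _ (by simp [gads]), ?_⟩
    refine List.isChain_cons_cons.mpr ⟨hmem _ (by simp [gads]), ?_⟩
    refine List.isChain_cons_cons.mpr ⟨hmem _ (by simp [gads]), ?_⟩
    exact List.isChain_pair.mpr (hmem _ (by simp [gads]))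
  · intro u hu
    simp only [List.drop, List.dropLast_cons₂, List.dropLast_singleton, List.mem_cons,
      List.not_mem_nil, or_false] at hu
    rcases hu with rfl|rfl|rfl|rfl
    exacts [a_nCR, b_nCR, e_nCR, d_nCR]

lemma exists_big_move (hn2 : 2 ≤ n) (hm : 1 ≤ m) {E0 : Set Edge}
    (hinv : ∀ e ∈ EG n m, (∀ j, j < n - 1 → e ∉ gads j) → e ∈ E0) :
    ∃ v E', LegalMove (Cset n m) (Rrel lit m) (Vtx.g (n-1)) E0 v E' := by
  have hn1 : n - 1 + 1 = n := by omega
  have hmem : ∀ e ∈ gads (n-1), e ∈ E0 := fun e he =>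
    hinv e (gads_sub_EG (by omega) he)
      (fun j hj hj2 => gads_disj (by omega : j ≠ n - 1) hj2 he)
  have hgx : (Vtx.g n, Vtx.x 1) ∈ E0 :=
    hinv _ (Or.inr (Or.inr (Or.inl rfl))) (fun j _ => gads_not_x)
  have hxy : (Vtx.x 1, Vtx.y 1) ∈ E0 :=
    hinv _ (Or.inr (Or.inr (Or.inr (Or.inl ⟨1, le_rfl, hm, Or.inl rfl⟩))))
      (fun j _ => gads_not_y)
  have hyz : (Vtx.y 1, Vtx.z 1) ∈ E0 :=
    hinv _ (Or.inr (Or.inr (Or.inr (Or.inl ⟨1, le_rfl, hm, Or.inr (Or.inl rfl)⟩))))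
      (fun j _ => gads_not_z)
  refine ⟨Vtx.z 1, _,
    [Vtx.g (n-1), Vtx.a n, Vtx.b n, Vtx.e n, Vtx.d n, Vtx.g n, Vtx.x 1, Vtx.y 1, Vtx.z 1],
    g_mC (by omega), Or.inl (z_mC le_rfl hm), by simp, by simp; omega, rfl, by simp,
    ?_, ?_, rfl⟩
  · refine List.isChain_cons_cons.mpr ⟨hmem _ (by simp [gads, Prod.ext_iff]; omega), ?_⟩
    refine List.isChain_cons_cons.mpr ⟨hmem _ (by simp [gads, Prod.ext_iff]; omega), ?_⟩
    refine List.isChain_cons_cons.mpr ⟨hmem _ (by simp [gads, Prod.ext_iff]; omega), ?_⟩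
    refine List.isChain_cons_cons.mpr ⟨hmem _ (by simp [gads, Prod.ext_iff]; omega), ?_⟩
    refine List.isChain_cons_cons.mpr ⟨hmem _ (by simp [gads, Prod.ext_iff]; omega), ?_⟩
    refine List.isChain_cons_cons.mpr ⟨hgx, ?_⟩
    refine List.isChain_cons_cons.mpr ⟨hxy, ?_⟩
    exact List.isChain_pair.mpr hyz
  · intro u hu
    simp only [List.drop, List.dropLast_cons₂, List.dropLast_singleton, List.mem_cons,
      List.not_mem_nil, or_false] at hu
    rcases hu with rfl|rfl|rfl|rfl|rfl|rfl|rfl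
    · exact a_nCR
    · exact b_nCR
    · exact e_nCR
    · exact d_nCR
    · rintro (h | h)
      · exact g_nC (by omega) h
      · exact g_nR h
    · exact x_nCR
    · exact y_nCR

lemma turn_mod {C : Set Vtx} {R : Set (Vtx × Edge)} {s : Vtx} {E0 : Set Edge}
    (P : Play C R s E0) (k : ℕ) :
    P.turn k = if k % 2 = 0 then Player.ex else Player.fa := by
  induction k with
  | zero => simpa using P.init_turn
  | succ k ih =>
    rw [P.turn_alt, ih]
    rcases Nat.mod_two_eq_zero_or_one k with h | h
    · have h2 : (k+1) % 2 = 1 := by omega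
      simp [h, h2, Player.other]
    · have h2 : (k+1) % 2 = 0 := by omega
      simp [h, h2, Player.other]

end Lemmas4

/-- Every play of the graph game on `(G, C, s, R)` terminates and has
at most `n + 1` moves: its first `n - 1` moves end at `g₁, …, g_{n-1}` respectively, its
`n`-th move (made by the ∀-player) ends at some `zᵢ` with `i ∈ {1, …, m}`, and then
either the ∃-player makes a winning `(n+1)`-st move to some vertex
`w_{i,j} ∈ R⁻¹(E)` or the ∃-player has no legal move and loses. -/
theorem play_structure
    (n m : ℕ) (hn : Even n) (hn2 : 2 ≤ n) (hm : 1 ≤ m)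
    (lit : ℕ → ℕ → Lit) (hwf : LitWF n m lit)
    (P : Play (Cset n m) (Rrel lit m) (Vtx.g 0) (EG n m)) :
    P.len ≤ n + 1 ∧
    (∀ i, 1 ≤ i → i ≤ n - 1 → P.act i = Vtx.g i) ∧
    n ≤ P.len ∧
    P.turn (n - 1) = Player.fa ∧
    (∃ i, 1 ≤ i ∧ i ≤ m ∧ P.act n = Vtx.z i) ∧
    ((P.len = n + 1 ∧ P.turn n = Player.ex ∧
        ∃ i j, 1 ≤ i ∧ i ≤ m ∧ 1 ≤ j ∧ j ≤ 3 ∧ P.act (n + 1) = Vtx.w i j ∧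
          Vtx.w i j ∈ Rinv (Rrel lit m) (P.edg n)) ∨
     (P.len = n ∧ P.turn n = Player.ex ∧
        ∀ v E', ¬ LegalMove (Cset n m) (Rrel lit m) (P.act n) (P.edg n) v E')) := by
  have hnmod : n % 2 = 0 := Nat.even_iff.mp hn
  -- the first n - 1 moves
  have key : ∀ k, k ≤ n - 1 →
      k ≤ P.len ∧ P.act k = Vtx.g k ∧ P.edg k ⊆ EG n m ∧
      (∀ e ∈ EG n m, (∀ j, j < k → e ∉ gads j) → e ∈ P.edg k) := by
    intro k
    induction k with
    | zero =>
      intro _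
      exact ⟨Nat.zero_le _, P.init_act, by rw [P.init_edg],
        by rw [P.init_edg]; exact fun e he _ => he⟩
    | succ k ih =>
      intro hk
      obtain ⟨hkl, hact, hsub, hinv⟩ := ih (by omega)
      obtain ⟨v0, E0', hmove⟩ := exists_small_move (n := n) (m := m) (lit := lit) hk hinv
      have hklt : k < P.len := by
        rcases Nat.lt_or_ge k P.len with h | h
        · exact h
        · exfalso
          have hlen : P.len = k := by omega
          rcases P.maximal with ⟨hpos, hwin⟩ | hnomove
          · rw [hlen, hact] at hwin
            exact g_nR hwin
          · rw [hlen, hact] at hnomove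
            exact hnomove v0 E0' hmove
      obtain ⟨p, hC, hvC, hlen2, hnd, hhead, hlast, hchain, hintl, hE'⟩ := P.step k hklt
      rw [hact] at hhead
      have hforced := force_small hk hsub hlen2 hhead hlast hchain hintl hvC
      have hpe : pathEdges p ⊆ gads k := by
        rcases hforced with rfl | rfl
        · exact pathEdges_b
        · exact pathEdges_c
      have hact1 : P.act (k+1) = Vtx.g (k+1) := by
        rcases hforced with rfl | rfl <;> · symm; simpa using hlast
      refine ⟨by omega, hact1, ?_, ?_⟩
      · rw [hE']; exact fun e he => hsub he.1
      · intro e he havoid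
        rw [hE']
        refine ⟨hinv e he (fun j hj => havoid j (by omega)), fun hp => ?_⟩
        exact havoid k (by omega) (hpe hp)
  obtain ⟨hn1l, hactn1, hsubn1, hinvn1⟩ := key (n-1) le_rfl
  -- the n-th move
  obtain ⟨v0, E0', hmoveb⟩ :=
    exists_big_move (n := n) (m := m) (lit := lit) hn2 hm hinvn1
  have hn1lt : n - 1 < P.len := by
    rcases Nat.lt_or_ge (n-1) P.len with h | h
    · exact h
    · exfalso
      have hlen : P.len = n - 1 := by omega
      rcases P.maximal with ⟨hpos, hwin⟩ | hnomove
      · rw [hlen, hactn1] at hwin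
        exact g_nR hwin
      · rw [hlen, hactn1] at hnomove
        exact hnomove v0 E0' hmoveb
  have hn1 : n - 1 + 1 = n := by omega
  have hstep := P.step (n-1) hn1lt
  rw [hn1] at hstep
  obtain ⟨p, hC, hvC, hlen2, hnd, hhead, hlast, hchain, hintl, hE'⟩ := hstep
  rw [hactn1] at hhead
  obtain ⟨i, hi1, him, hzi⟩ :=
    force_big hn2 hsubn1 hlen2 hhead hlast hchain hintl hvC
  have hsubn : P.edg n ⊆ EG n m := by rw [hE']; exact fun e he => hsubn1 he.1
  have hnlen : n ≤ P.len := by omega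
  have hturnn : P.turn n = Player.ex := by simp [turn_mod P n, hnmod]
  have hfin : (P.len = n + 1 ∧ P.turn n = Player.ex ∧
        ∃ i' j', 1 ≤ i' ∧ i' ≤ m ∧ 1 ≤ j' ∧ j' ≤ 3 ∧ P.act (n + 1) = Vtx.w i' j' ∧
          Vtx.w i' j' ∈ Rinv (Rrel lit m) (P.edg n)) ∨
      (P.len = n ∧ P.turn n = Player.ex ∧
        ∀ v E', ¬ LegalMove (Cset n m) (Rrel lit m) (P.act n) (P.edg n) v E') := by
    rcases Nat.lt_or_ge n P.len with hlt | hge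
    · left
      obtain ⟨p', hC', hvC', hlen2', hnd', hhead', hlast', hchain', hintl', hE''⟩ :=
        P.step n hlt
      rw [hzi] at hhead'
      have hwin : P.act (n+1) ∈ Rinv (Rrel lit m) (P.edg n) :=
        force_zmove hsubn hlen2' hhead' hlast' hchain' hvC'
      obtain ⟨i', j', h1, h2, h3, h4, h5⟩ := rinv_w hwin
      have hlen : P.len = n + 1 := by
        rcases Nat.lt_or_ge (n+1) P.len with h | h
        · exact absurd hwin (P.not_over n h)
        · omega
      exact ⟨hlen, hturnn, i', j', h1, h2, h3, h4, h5, h5 ▸ hwin⟩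
    · right
      have hlen : P.len = n := by omega
      rcases P.maximal with ⟨hpos, hwin⟩ | hnomove
      · rw [hlen, hzi] at hwin
        exact absurd hwin z_nR
      · rw [hlen] at hnomove
        exact ⟨hlen, hturnn, hnomove⟩
  have hturnn1 : P.turn (n-1) = Player.fa := by
    have h1 : (n-1) % 2 = 1 := by omega
    simp [turn_mod P (n-1), h1]
  refine ⟨?_, fun i h1 h2 => (key i h2).2.1, hnlen, hturnn1, ⟨i, hi1, him, hzi⟩, hfin⟩
  rcases hfin with ⟨h, -⟩ | ⟨h, -⟩ <;> omega

end PhutballQBF
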